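/- arXiv:0804.4391 — 2 statements merged into one kernel-verified Lean document; each statement's English description precedes it below -/
import Mathlib

section
/- For every z > 0, one has 0 < 1 − tanh(z)/z < 1, and the function z ↦ 1 − tanh(z)/z is strictly increasing on (0, ∞). -/
lemma aux_sinh_lt_mul (z : ℝ) (hz : 0 < z) : Real.sinh z < z * Real.cosh z := by
  have hmono : StrictMonoOn (fun x : ℝ => x * Real.cosh x - Real.sinh x) (Set.Ici 0) := by
    apply strictMonoOn_of_deriv_pos (convex_Ici 0)
    · fun_prop
    · intro x hx
      rw [interior_Ici] at hx
      simp only [Set.mem_Ioi] at hx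
      have h1 : HasDerivAt (fun x : ℝ => x * Real.cosh x - Real.sinh x)
          (1 * Real.cosh x + x * Real.sinh x - Real.cosh x) x :=
        ((hasDerivAt_id x).mul (Real.hasDerivAt_cosh x)).sub (Real.hasDerivAt_sinh x)
      rw [h1.deriv]
      have hs : 0 < Real.sinh x := Real.sinh_pos_iff.2 hx
      nlinarith
  have h := hmono Set.self_mem_Ici (Set.mem_Ici.2 hz.le) hz
  simpa using h

lemma aux_deriv (z : ℝ) (hz : 0 < z) :
    HasDerivAt (fun z : ℝ => 1 - Real.tanh z / z)
      ((Real.sinh z * Real.cosh z - z) / (Real.cosh z * z) ^ 2) z := by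
  have hc : (0 : ℝ) < Real.cosh z := Real.cosh_pos z
  have hq : HasDerivAt (fun z : ℝ => Real.sinh z / (Real.cosh z * z))
      ((Real.cosh z * (Real.cosh z * z) -
        Real.sinh z * (Real.sinh z * z + Real.cosh z * 1)) / (Real.cosh z * z) ^ 2) z :=
    (Real.hasDerivAt_sinh z).div ((Real.hasDerivAt_cosh z).mul (hasDerivAt_id z))
      (by positivity)
  have heq : (fun z : ℝ => 1 - Real.tanh z / z)
      = fun z => 1 - Real.sinh z / (Real.cosh z * z) := by
    funext x
    rw [Real.tanh_eq_sinh_div_cosh, div_div]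
  rw [heq]
  have h := (hasDerivAt_const z (1 : ℝ)).sub hq
  refine h.congr_deriv ?_
  rw [zero_sub, ← neg_div]
  congr 1
  nlinarith [Real.cosh_sq_sub_sinh_sq z]

theorem stmt10 :
    (∀ z : ℝ, 0 < z → 0 < 1 - Real.tanh z / z ∧ 1 - Real.tanh z / z < 1) ∧
    StrictMonoOn (fun z : ℝ => 1 - Real.tanh z / z) (Set.Ioi 0) := by
  constructor
  · intro z hz
    have hc : (0 : ℝ) < Real.cosh z := Real.cosh_pos z
    have hs : 0 < Real.sinh z := Real.sinh_pos_iff.2 hz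
    have ht : 0 < Real.tanh z := by
      rw [Real.tanh_eq_sinh_div_cosh]; positivity
    have hlt : Real.tanh z < z := by
      rw [Real.tanh_eq_sinh_div_cosh, div_lt_iff₀ hc]
      nlinarith [aux_sinh_lt_mul z hz]
    constructor
    · have : Real.tanh z / z < 1 := (div_lt_one hz).2 hlt
      linarith
    · have : 0 < Real.tanh z / z := div_pos ht hz
      linarith
  · apply strictMonoOn_of_deriv_pos (convex_Ioi 0)
    · intro x hx
      exact ((aux_deriv x hx).differentiableAt.continuousAt).continuousWithinAt
    · intro x hx
      rw [interior_Ioi] at hx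
      rw [(aux_deriv x hx).deriv]
      have hc : (1 : ℝ) ≤ Real.cosh x := Real.one_le_cosh x
      have hs : x < Real.sinh x := Real.self_lt_sinh_iff.2 hx
      simp only [Set.mem_Ioi] at hx
      have hsp : 0 < Real.sinh x := Real.sinh_pos_iff.2 hx
      have h2 : Real.sinh x ≤ Real.sinh x * Real.cosh x :=
        le_mul_of_one_le_right hsp.le hc
      have hnum : 0 < Real.sinh x * Real.cosh x - x := by linarith
      positivity
end

section
/- Suppose for each N the Fisher information is J^{(N)}(θ) = N·J(θ) with J(θ) positive definite, and β_N = min_{b ∈ H¹} Z^{(N)}[b] where Z^{(N)}[b] = ∫[‖b‖² + Tr((I+∂b/∂θ)(N J(θ))⁻¹(I+∂b/∂θ)ᵀ)] dp(θ). Then the sequence {N β_N} is non-decreasing in N and bounded above by s = ∫Tr(J⁻¹(θ)) dp(θ); in particular N β_N ≤ s for all N. -/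
open MeasureTheory Matrix
open scoped ENNReal

/-- Jacobian matrix of `b` at `θ`: entry `(i,j)` is `∂bᵢ/∂θⱼ`. -/
noncomputable def jac {n : ℕ} (b : (Fin n → ℝ) → (Fin n → ℝ)) (θ : Fin n → ℝ) :
    Matrix (Fin n) (Fin n) ℝ :=
  fun i j => fderiv ℝ b θ (Pi.single j 1) i

/-- Squared Euclidean norm of a vector in `ℝⁿ`. -/
noncomputable def eNormSq {n : ℕ} (v : Fin n → ℝ) : ℝ := ∑ i, (v i) ^ 2

/-- The functional `Z^{(N)}[b]` with Fisher information `J^{(N)}(θ) = N · J(θ)`. -/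
noncomputable def ZN {n : ℕ} (p : Measure (Fin n → ℝ))
    (J : (Fin n → ℝ) → Matrix (Fin n) (Fin n) ℝ) (N : ℕ)
    (b : (Fin n → ℝ) → (Fin n → ℝ)) : ℝ≥0∞ :=
  ∫⁻ θ, ENNReal.ofReal (eNormSq (b θ) +
    ((1 + jac b θ) * ((N : ℝ) • J θ)⁻¹ * (1 + jac b θ)ᵀ).trace) ∂p


lemma core {n : ℕ} (p : Measure (Fin n → ℝ))
    (J : (Fin n → ℝ) → Matrix (Fin n) (Fin n) ℝ)
    (hJ : ∀ᵐ θ ∂p, (J θ).PosDef)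
    (b : (Fin n → ℝ) → (Fin n → ℝ)) {N : ℕ} (hN : 1 ≤ N) :
    (N : ℝ≥0∞) * ZN p J N b =
      ∫⁻ θ, ENNReal.ofReal ((N : ℝ) * eNormSq (b θ) +
        ((1 + jac b θ) * (J θ)⁻¹ * (1 + jac b θ)ᵀ).trace) ∂p := by
  have hN0 : (N : ℝ) ≠ 0 := Nat.cast_ne_zero.mpr (by omega)
  rw [ZN, ← lintegral_const_mul' _ _ (by simp : (N : ℝ≥0∞) ≠ ∞)]
  refine lintegral_congr_ae ?_
  filter_upwards [hJ] with θ hθ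
  haveI : Invertible (N : ℝ) := invertibleOfNonzero hN0
  have hdet : IsUnit (J θ).det := hθ.det_pos.ne'.isUnit
  have hinv : ((N : ℝ) • J θ)⁻¹ = (N : ℝ)⁻¹ • (J θ)⁻¹ := by
    rw [Matrix.inv_smul (A := J θ) (N : ℝ) hdet, invOf_eq_inv (N : ℝ)]
  rw [hinv, Matrix.mul_smul, Matrix.smul_mul, Matrix.trace_smul]
  rw [show (N : ℝ≥0∞) = ENNReal.ofReal (N : ℝ) by simp,
    ← ENNReal.ofReal_mul (by positivity)]
  congr 1
  field_simp
  rw [smul_eq_mul, mul_add, ← mul_assoc, mul_one_div_cancel hN0, one_mul]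

theorem stmt18 {n : ℕ} (p : Measure (Fin n → ℝ)) [IsProbabilityMeasure p]
    (J : (Fin n → ℝ) → Matrix (Fin n) (Fin n) ℝ)
    (hJ : ∀ᵐ θ ∂p, (J θ).PosDef)
    (β : ℕ → ℝ≥0∞)
    (hβ : ∀ N, β N = ⨅ (b : (Fin n → ℝ) → (Fin n → ℝ)) (_ : Differentiable ℝ b),
      ZN p J N b)
    (s : ℝ≥0∞) (hs : s = ∫⁻ θ, ENNReal.ofReal ((J θ)⁻¹.trace) ∂p) :
    (∀ N : ℕ, 1 ≤ N → (N : ℝ≥0∞) * β N ≤ ((N + 1 : ℕ) : ℝ≥0∞) * β (N + 1)) ∧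
    (∀ N : ℕ, 1 ≤ N → (N : ℝ≥0∞) * β N ≤ s) := by
  have hmono : ∀ (b : (Fin n → ℝ) → (Fin n → ℝ)) (N : ℕ), 1 ≤ N →
      (N : ℝ≥0∞) * ZN p J N b ≤ ((N + 1 : ℕ) : ℝ≥0∞) * ZN p J (N + 1) b := by
    intro b N hN
    rw [core p J hJ b hN, core p J hJ b (hN.trans (Nat.le_succ N))]
    refine lintegral_mono fun θ => ENNReal.ofReal_le_ofReal ?_
    have ha : 0 ≤ eNormSq (b θ) := Finset.sum_nonneg fun i _ => sq_nonneg _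
    have : (N : ℝ) ≤ ((N + 1 : ℕ) : ℝ) := by push_cast; linarith
    nlinarith
  constructor
  · intro N hN
    rw [hβ (N + 1), ENNReal.mul_iInf_of_ne (by simp) (by simp)]
    refine le_iInf fun b => ?_
    rw [ENNReal.mul_iInf_of_ne (by simp) (by simp)]
    refine le_iInf fun hb => ?_
    calc (N : ℝ≥0∞) * β N ≤ (N : ℝ≥0∞) * ZN p J N b :=
            mul_le_mul_right (by rw [hβ N]; exact iInf₂_le b hb) _
      _ ≤ _ := hmono b N hN
  · intro N hN
    have hb0 : Differentiable ℝ (fun _ : Fin n → ℝ => (0 : Fin n → ℝ)) :=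
      differentiable_const _
    have hle : β N ≤ ZN p J N (fun _ => 0) := by rw [hβ N]; exact iInf₂_le _ hb0
    calc (N : ℝ≥0∞) * β N ≤ (N : ℝ≥0∞) * ZN p J N (fun _ => 0) :=
          mul_le_mul_right hle _
      _ = s := by
          rw [core p J hJ _ hN, hs]
          refine lintegral_congr fun θ => ?_
          have hjac : jac (fun _ : Fin n → ℝ => (0 : Fin n → ℝ)) θ = 0 := by
            funext i j; simp [jac]
          simp [hjac, eNormSq]
end
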